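/- An irrational number x is a Brjuno number if and only if both x and −x are semi-Brjuno numbers. -/

import Mathlib

open Set Filter

/-- The Gauss map `G(t) = 1/t − ⌊1/t⌋`. -/
noncomputable def gmap (t : ℝ) : ℝ := 1 / t - ⌊1 / t⌋

/-- `ra y n = a_{n+1}(y) = ⌊1/G^n(y)⌋`, the regular continued fraction partial
quotients of `y`. -/
noncomputable def ra (y : ℝ) (n : ℕ) : ℤ := ⌊1 / (gmap^[n] y)⌋

/-- `qcf y (n+1) = q_n`, with `q_{-1} = 0`, `q_0 = 1` and
`q_{n+1} = a_{n+1}·q_n + q_{n−1}`: the denominators of the regular convergents. -/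
noncomputable def qcf (y : ℝ) : ℕ → ℤ
  | 0 => 0
  | 1 => 1
  | n + 2 => ra y n * qcf y (n + 1) + qcf y n

/-- The by-excess continued fraction map `A_0(x) = ⌊1/x + 1⌋ − 1/x`. -/
noncomputable def exm (x : ℝ) : ℝ := ⌊1 / x + 1⌋ - 1 / x

/-- `bEx x n = b_{n+1} = ⌊1/A_0^n(x) + 1⌋`, the by-excess digits of `x`. -/
noncomputable def bEx (x : ℝ) (n : ℕ) : ℤ := ⌊1 / (exm^[n] x) + 1⌋

/-- `qstar x (n+1) = q*_n`, with `q*_{-1} = 0`, `q*_0 = 1` and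
`q*_n = b_n·q*_{n−1} − q*_{n−2}`. -/
noncomputable def qstar (x : ℝ) : ℕ → ℤ
  | 0 => 0
  | 1 => 1
  | n + 2 => bEx x n * qstar x (n + 1) - qstar x n

/-- `x` is a Brjuno number if `∑_{n≥0} log(q_{n+1})/q_n < ∞` for the regular
continued fraction of `x − ⌊x⌋`. -/
def IsBrjuno (x : ℝ) : Prop :=
  Summable fun n : ℕ =>
    Real.log (qcf (Int.fract x) (n + 2) : ℝ) / (qcf (Int.fract x) (n + 1) : ℝ)

/-- `x` is a semi-Brjuno number if `∑_{n≥0} log(b_{n+1} − 1)/q*_n < ∞` for the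
by-excess continued fraction of `x − ⌊x⌋`. -/
def IsSemiBrjuno (x : ℝ) : Prop :=
  Summable fun n : ℕ =>
    Real.log ((bEx (Int.fract x) n : ℝ) - 1) / (qstar (Int.fract x) (n + 1) : ℝ)

lemma exm_eq (t : ℝ) : exm t = 1 - gmap t := by
  unfold exm gmap
  rw [show (1:ℝ)/t + 1 = 1/t + (1:ℤ) by push_cast; ring, Int.floor_add_intCast]
  push_cast; ring

lemma gmap_eq_fract (t : ℝ) : gmap t = Int.fract (1/t) := rfl

lemma ra_def (z : ℝ) (n : ℕ) : ra z n = ⌊1/(gmap^[n] z)⌋ := rfl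

lemma orbit_mem (z : ℝ) (hz : Irrational z) (h0 : 0 < z) (h1 : z < 1) :
    ∀ n, Irrational (gmap^[n] z) ∧ 0 < gmap^[n] z ∧ gmap^[n] z < 1 := by
  intro n
  induction n with
  | zero => exact ⟨hz, h0, h1⟩
  | succ n ih =>
    obtain ⟨hi, hp, hl⟩ := ih
    rw [Function.iterate_succ_apply']
    set w := gmap^[n] z
    have hinv : Irrational (1/w) := by
      rw [one_div]; exact (irrational_inv_iff).2 hi
    have hif : Irrational (gmap w) := by
      rw [gmap_eq_fract]; exact hinv.sub_intCast _
    refine ⟨hif, ?_, ?_⟩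
    · rcases lt_or_eq_of_le (Int.fract_nonneg (1/w)) with h | h
      · exact h
      · exact absurd (gmap_eq_fract w ▸ h.symm) (by simpa using hif.ne_int 0)
    · rw [gmap_eq_fract]; exact Int.fract_lt_one _

lemma ra_pos (z : ℝ)
    (horb : ∀ n, Irrational (gmap^[n] z) ∧ 0 < gmap^[n] z ∧ gmap^[n] z < 1) :
    ∀ n, 1 ≤ ra z n := by
  intro n
  obtain ⟨hi, hp, hl⟩ := horb n
  have h : (1:ℝ) < 1 / gmap^[n] z := one_lt_one_div hp hl
  exact Int.le_floor.2 (by exact_mod_cast h.le)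

section
variable {z : ℝ}

lemma qcf_nonneg (hra : ∀ n, 1 ≤ ra z n) : ∀ n, 0 ≤ qcf z n := by
  intro n
  induction n using Nat.strong_induction_on with
  | _ n ih =>
    match n with
    | 0 => simp [qcf]
    | 1 => simp [qcf]
    | n + 2 =>
      rw [qcf]
      have h1 := ih (n+1) (by omega)
      have h2 := ih n (by omega)
      nlinarith [hra n]

lemma qcf_pos (hra : ∀ n, 1 ≤ ra z n) : ∀ n, 1 ≤ qcf z (n + 1) := by
  intro n
  induction n using Nat.strong_induction_on with
  | _ n ih =>
    match n with
    | 0 => simp [qcf]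
    | n + 1 =>
      show 1 ≤ qcf z (n + 2)
      rw [qcf]
      have h1 := ih n (by omega)
      have h2 := qcf_nonneg hra n
      nlinarith [hra n]

lemma qcf_mono (hra : ∀ n, 1 ≤ ra z n) (n : ℕ) : qcf z (n + 1) ≤ qcf z (n + 2) := by
  rw [qcf]
  have h1 := qcf_pos hra n
  have h2 := qcf_nonneg hra n
  nlinarith [hra n]

lemma qcf_two_step (hra : ∀ n, 1 ≤ ra z n) (n : ℕ) : 2 * qcf z (n + 1) ≤ qcf z (n + 3) := by
  have h : qcf z (n + 3) = ra z (n+1) * qcf z (n + 2) + qcf z (n+1) := rfl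
  rw [h]
  have h1 := qcf_pos hra n
  have h2 := qcf_pos hra (n+1)
  have h3 := qcf_mono hra n
  nlinarith [hra (n+1)]
end

lemma floor_lt_self {w : ℝ} (hwi : Irrational w) : (⌊1/w⌋ : ℝ) < 1/w := by
  rcases lt_or_eq_of_le (Int.floor_le (1/w)) with h | h
  · exact h
  · exfalso
    have : Irrational (1/w) := by rw [one_div]; exact irrational_inv_iff.2 hwi
    exact this.ne_int ⌊1/w⌋ h.symm

lemma prelim {w : ℝ} {m : ℕ} (hwi : Irrational w) (h0 : 0 < w) (h1 : w < 1)
    (hm : (m : ℤ) + 1 ≤ ⌊1/w⌋) :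
    0 < 1/w - (m+1) ∧ 1 - w/(1 - m*w) = 1 - 1/(1/w - m) := by
  have hfl : (⌊1/w⌋ : ℝ) < 1/w := floor_lt_self hwi
  have hm' : (m : ℝ) + 1 ≤ (⌊1/w⌋ : ℝ) := by exact_mod_cast hm
  have ht : 0 < 1/w - (m+1) := by linarith
  have hw0 : w ≠ 0 := ne_of_gt h0
  have hmw : 0 < 1 - m*w := by
    have : (m:ℝ)*w < (1/w - 1)*w := by
      apply mul_lt_mul_of_pos_right _ h0
      linarith
    rw [sub_mul, one_div, inv_mul_cancel₀ hw0] at this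
    linarith
  refine ⟨ht, ?_⟩
  have htm : 0 < 1/w - m := by linarith
  have h : w/(1 - m*w) = 1/(1/w - m) := by
    rw [div_eq_div_iff hmw.ne' htm.ne']
    field_simp
  rw [h]

lemma inv_one_sub_inv (t : ℝ) (ht : 1 < t) : 1/(1 - 1/t) = 1 + 1/(t - 1) := by
  have h0 : t ≠ 0 := by linarith
  have h1 : t - 1 ≠ 0 := by intro h; rw [sub_eq_zero] at h; simp [h] at ht
  have h2 : 1 - 1/t ≠ 0 := by
    have : 1/t < 1 := by rw [div_lt_one (by linarith)]; exact ht
    linarith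
  field_simp
  ring

section
variable {w : ℝ} {m : ℕ}

lemma step_small (hwi : Irrational w) (h0 : 0 < w) (h1 : w < 1)
    (hm1 : (m : ℤ) + 2 ≤ ⌊1/w⌋) :
    ⌊1/(1 - w/(1 - (m:ℝ)*w)) + 1⌋ = 2 ∧
    exm (1 - w/(1 - (m:ℝ)*w)) = 1 - w/(1 - ((m:ℝ)+1)*w) := by
  obtain ⟨ht, hp⟩ := prelim hwi h0 h1 (by omega : (m:ℤ) + 1 ≤ ⌊1/w⌋)
  obtain ⟨ht2, hp2⟩ := prelim (m := m + 1) hwi h0 h1 (by push_cast; omega)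
  push_cast at hp2 ht2
  have hq1 : (0:ℝ) < 1/w - (m:ℝ) - 1 := by linarith
  have hq2 : (0:ℝ) < 1/w - (m:ℝ) := by linarith
  have hq3 : (1:ℝ) < 1/w - (m:ℝ) - 1 := by linarith
  have h1p : 1/(1 - 1/(1/w - (m:ℝ))) = 1 + 1/(1/w - (m:ℝ) - 1) := by
    rw [inv_one_sub_inv _ (by linarith)]
  have hfr1 : 0 < 1/(1/w - (m:ℝ) - 1) := by positivity
  have hfr2 : 1/(1/w - (m:ℝ) - 1) < 1 := by rw [div_lt_one hq1]; linarith
  have hX : 1/(1 - w/(1 - (m:ℝ)*w)) = 1 + 1/(1/w - (m:ℝ) - 1) := by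
    rw [hp, h1p]
  have hfl : ⌊1/(1 - w/(1 - (m:ℝ)*w)) + 1⌋ = 2 := by
    rw [hX, Int.floor_eq_iff]
    constructor <;> push_cast <;> linarith
  refine ⟨hfl, ?_⟩
  rw [exm, hfl, hX, hp2]
  have h : 1/w - ((m:ℝ) + 1) = 1/w - (m:ℝ) - 1 := by ring
  rw [h]
  push_cast
  ring

lemma step_big (hwi : Irrational w) (h0 : 0 < w) (h1 : w < 1)
    (hm1 : (m : ℤ) + 1 = ⌊1/w⌋) :
    ⌊1/(1 - w/(1 - (m:ℝ)*w)) + 1⌋ = ⌊1/gmap w⌋ + 2 ∧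
    exm (1 - w/(1 - (m:ℝ)*w)) = 1 - gmap (gmap w) := by
  obtain ⟨ht, hp⟩ := prelim hwi h0 h1 (le_of_eq hm1)
  have hinv : Irrational (1/w) := by rw [one_div]; exact irrational_inv_iff.2 hwi
  have hg : gmap w = 1/w - ((m:ℝ) + 1) := by
    rw [gmap, ← hm1]; push_cast; ring
  have hgi : Irrational (gmap w) := by
    rw [gmap_eq_fract]; exact hinv.sub_intCast _
  have hg0 : 0 < gmap w := by
    rcases lt_or_eq_of_le (Int.fract_nonneg (1/w)) with h | h
    · exact h
    · exact absurd (gmap_eq_fract w ▸ h.symm) (by simpa using hgi.ne_int 0)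
  have hq2 : (0:ℝ) < 1/w - (m:ℝ) := by linarith
  have h1p : 1/(1 - 1/(1/w - (m:ℝ))) = 1 + 1/(1/w - (m:ℝ) - 1) := by
    rw [inv_one_sub_inv _ (by linarith)]
  have htg : 1/w - (m:ℝ) - 1 = gmap w := by rw [hg]; ring
  have hX : 1/(1 - w/(1 - (m:ℝ)*w)) = 1 + 1/gmap w := by
    rw [hp, h1p, htg]
  have hfl : ⌊1/(1 - w/(1 - (m:ℝ)*w)) + 1⌋ = ⌊1/gmap w⌋ + 2 := by
    rw [hX, show 1 + 1/gmap w + 1 = 1/gmap w + ((2:ℤ):ℝ) by push_cast; ring,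
      Int.floor_add_intCast]
  refine ⟨hfl, ?_⟩
  rw [exm, hfl, hX]
  rw [show gmap (gmap w) = 1/gmap w - ⌊1/gmap w⌋ from rfl]
  push_cast
  ring
end

/-- block lengths -/
noncomputable def AZ (z : ℝ) (k : ℕ) : ℕ := (ra z (2*k)).toNat

/-- block start positions -/
noncomputable def NZ (z : ℝ) : ℕ → ℕ
  | 0 => 0
  | k+1 => NZ z k + AZ z k
lemma AZ_cast {z : ℝ} (hra : ∀ n, 1 ≤ ra z n) (k : ℕ) : (AZ z k : ℤ) = ra z (2*k) := by
  have := hra (2*k)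
  unfold AZ
  omega

lemma AZ_pos {z : ℝ} (hra : ∀ n, 1 ≤ ra z n) (k : ℕ) : 1 ≤ AZ z k := by
  have := hra (2*k)
  unfold AZ
  omega

lemma inv_main (z : ℝ) (hzi : Irrational z) (hz0 : 0 < z) (hz1 : z < 1)
    (Q XS YS : ℕ → ℤ)
    (hrec : ∀ n, Q (n+2) = bEx (1-z) n * Q (n+1) - Q n)
    (hQ0 : Q 0 = XS 0) (hQ1 : Q 1 = XS 0 + YS 0)
    (hXS : ∀ k, XS (k+1) = XS k + ra z (2*k) * YS k)
    (hYS : ∀ k, YS (k+1) = ra z (2*k+1) * XS (k+1) + YS k) :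
    ∀ n, ∃ k m : ℕ, n = NZ z k + m ∧ m < AZ z k ∧
      exm^[n] (1-z) = 1 - gmap^[2*k] z/(1 - (m:ℝ) * gmap^[2*k] z) ∧
      Q n = XS k + (m:ℤ) * YS k ∧ Q (n+1) = XS k + ((m:ℤ)+1) * YS k := by
  have horb := orbit_mem z hzi hz0 hz1
  have hra := ra_pos z horb
  intro n
  induction n with
  | zero =>
    refine ⟨0, 0, by simp [NZ], AZ_pos hra 0, ?_, by simpa using hQ0, by simpa using hQ1⟩
    simp
  | succ n ih =>
    obtain ⟨k, m, hn, hm, hx, hQn, hQn1⟩ := ih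
    obtain ⟨hwi, hw0, hw1⟩ := horb (2*k)
    have hbEx : bEx (1-z) n = ⌊1/(exm^[n] (1-z)) + 1⌋ := rfl
    have hiter : exm^[n+1] (1-z) = exm (exm^[n] (1-z)) := Function.iterate_succ_apply' _ _ _
    have hAZ := AZ_cast hra k
    rcases lt_or_eq_of_le (Nat.succ_le_of_lt hm) with hlt | heq
    · -- small step: m+1 < AZ z k
      have hm2 : (m:ℤ) + 2 ≤ ⌊1/(gmap^[2*k] z)⌋ := by
        rw [← ra_def]; omega
      obtain ⟨hd, he⟩ := step_small hwi hw0 hw1 hm2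
      refine ⟨k, m+1, by omega, hlt, ?_, ?_, ?_⟩
      · rw [hiter, hx, he]; push_cast; ring_nf
      · push_cast; exact hQn1
      · have hb : bEx (1-z) n = 2 := by rw [hbEx, hx]; exact hd
        have := hrec n
        rw [hb, hQn, hQn1] at this
        rw [show n+1+1 = n+2 from rfl, this]
        push_cast; ring
    · -- big step: m+1 = AZ z k
      have hm1 : (m:ℤ) + 1 = ⌊1/(gmap^[2*k] z)⌋ := by rw [← ra_def]; omega
      obtain ⟨hd, he⟩ := step_big hwi hw0 hw1 hm1
      have hg1 : gmap (gmap^[2*k] z) = gmap^[2*k+1] z := (Function.iterate_succ_apply' _ _ _).symm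
      have hg2 : gmap (gmap (gmap^[2*k] z)) = gmap^[2*(k+1)] z := by
        rw [show 2*(k+1) = (2*k+1)+1 by ring, Function.iterate_succ_apply', hg1]
      refine ⟨k+1, 0, ?_, AZ_pos hra (k+1), ?_, ?_, ?_⟩
      · show n + 1 = NZ z k + AZ z k + 0
        omega
      · rw [hiter, hx, he, hg2]
        norm_num
      · -- Q (n+1) = XS (k+1) + 0 * YS (k+1)
        rw [hQn1, hXS]
        push_cast
        rw [show (m:ℤ) + 1 = ra z (2*k) by omega]
        ring
      · -- Q (n+2) = XS (k+1) + 1 * YS (k+1)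
        have hb : bEx (1-z) n = ra z (2*k+1) + 2 := by
          rw [hbEx, hx, hd, ra_def, hg1]
        have := hrec n
        rw [hb, hQn, hQn1] at this
        rw [show n+1+1 = n+2 from rfl, this, hYS, hXS]
        rw [show (m:ℤ) = ra z (2*k) - 1 by omega]
        ring

lemma digit_val (z : ℝ) (hzi : Irrational z) (hz0 : 0 < z) (hz1 : z < 1)
    {k m n : ℕ} (hm : m < AZ z k)
    (hx : exm^[n] (1-z) = 1 - gmap^[2*k] z/(1 - (m:ℝ) * gmap^[2*k] z)) :
    bEx (1-z) n = if m + 1 < AZ z k then 2 else ra z (2*k+1) + 2 := by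
  have horb := orbit_mem z hzi hz0 hz1
  have hra := ra_pos z horb
  obtain ⟨hwi, hw0, hw1⟩ := horb (2*k)
  have hbEx : bEx (1-z) n = ⌊1/(exm^[n] (1-z)) + 1⌋ := rfl
  have hAZ := AZ_cast hra k
  rcases lt_or_eq_of_le (Nat.succ_le_of_lt hm) with hlt | heq
  · rw [if_pos hlt, hbEx, hx]
    exact (step_small hwi hw0 hw1 (by rw [← ra_def]; omega)).1
  · rw [if_neg (by omega), hbEx, hx,
      (step_big hwi hw0 hw1 (by rw [← ra_def]; omega)).1, ra_def,
      Function.iterate_succ_apply']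

lemma NZ_succ (z : ℝ) (k : ℕ) : NZ z (k+1) = NZ z k + AZ z k := rfl

lemma NZ_le {z : ℝ} : ∀ {k k' : ℕ}, k ≤ k' → NZ z k ≤ NZ z k' := by
  intro k k' h
  induction k', h using Nat.le_induction with
  | base => exact le_refl _
  | succ n hn ih => rw [NZ_succ]; omega

lemma NZ_unique {z : ℝ} (hra : ∀ n, 1 ≤ ra z n) {k m k' m' : ℕ}
    (hm : m < AZ z k) (hm' : m' < AZ z k') (h : NZ z k + m = NZ z k' + m') :
    k = k' ∧ m = m' := by
  rcases Nat.lt_trichotomy k k' with hlt | heq | hgt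
  · exfalso
    have h1 : NZ z (k+1) ≤ NZ z k' := NZ_le hlt
    rw [NZ_succ] at h1
    omega
  · subst heq
    exact ⟨rfl, by omega⟩
  · exfalso
    have h1 : NZ z (k'+1) ≤ NZ z k := NZ_le hgt
    rw [NZ_succ] at h1
    omega

lemma extraction (z : ℝ) (hzi : Irrational z) (hz0 : 0 < z) (hz1 : z < 1)
    (Q XS YS : ℕ → ℤ)
    (hrec : ∀ n, Q (n+2) = bEx (1-z) n * Q (n+1) - Q n)
    (hQ0 : Q 0 = XS 0) (hQ1 : Q 1 = XS 0 + YS 0)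
    (hXS : ∀ k, XS (k+1) = XS k + ra z (2*k) * YS k)
    (hYS : ∀ k, YS (k+1) = ra z (2*k+1) * XS (k+1) + YS k) :
    (Summable fun n : ℕ => Real.log ((bEx (1-z) n : ℝ) - 1) / (Q (n+1) : ℝ)) ↔
    Summable fun k : ℕ => Real.log ((ra z (2*k+1) : ℝ) + 1) / (XS (k+1) : ℝ) := by
  have horb := orbit_mem z hzi hz0 hz1
  have hra := ra_pos z horb
  have hinv := inv_main z hzi hz0 hz1 Q XS YS hrec hQ0 hQ1 hXS hYS
  set S : ℕ → ℝ := fun n => Real.log ((bEx (1-z) n : ℝ) - 1) / (Q (n+1) : ℝ) with hS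
  set i : ℕ → ℕ := fun k => NZ z (k+1) - 1 with hi
  have hNZpos : ∀ k, 1 ≤ NZ z (k+1) := by
    intro k
    have h1 : NZ z 1 ≤ NZ z (k+1) := NZ_le (by omega)
    have h2 : NZ z 1 = 0 + AZ z 0 := rfl
    have := AZ_pos hra 0
    omega
  have hik : ∀ k, i k = NZ z k + (AZ z k - 1) := by
    intro k
    have h2 : NZ z (k+1) = NZ z k + AZ z k := rfl
    have := AZ_pos hra k
    simp only [hi]
    omega
  have hmono : StrictMono i := by
    apply strictMono_nat_of_lt_succ
    intro k
    have h1 := hik k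
    have h2 := hik (k+1)
    have h3 : NZ z (k+1) = NZ z k + AZ z k := rfl
    have h4 : NZ z (k+2) = NZ z (k+1) + AZ z (k+1) := rfl
    have := AZ_pos hra k
    have := AZ_pos hra (k+1)
    omega
  have hvan : ∀ n, n ∉ Set.range i → S n = 0 := by
    intro n hn
    obtain ⟨k, m, hnkm, hm, hx, hQn, hQn1⟩ := hinv n
    have hd := digit_val z hzi hz0 hz1 hm hx
    rcases lt_or_ge (m+1) (AZ z k) with hlt | hge
    · rw [if_pos hlt] at hd
      simp only [hS, hd]
      norm_num
    · exfalso
      apply hn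
      exact ⟨k, by rw [hik k]; omega⟩
  have hcomp : ∀ k, S (i k) = Real.log ((ra z (2*k+1) : ℝ) + 1) / (XS (k+1) : ℝ) := by
    intro k
    obtain ⟨k', m', hnkm, hm', hx, hQn, hQn1⟩ := hinv (i k)
    have hmk : AZ z k - 1 < AZ z k := by have := AZ_pos hra k; omega
    obtain ⟨hk, hmm⟩ := NZ_unique hra hmk hm' (by rw [← hnkm, hik k])
    subst hk
    subst hmm
    have hAZ := AZ_cast hra k
    have hAp := AZ_pos hra k
    have hd := digit_val z hzi hz0 hz1 hm' hx
    rw [if_neg (by omega)] at hd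
    have hQval : Q (i k + 1) = XS (k+1) := by
      rw [hQn1, hXS]
      rw [show ((AZ z k - 1 : ℕ):ℤ) + 1 = ra z (2*k) by omega]
    simp only [hS, hd, hQval]
    push_cast
    ring_nf
  rw [show (Summable fun k : ℕ => Real.log ((ra z (2*k+1) : ℝ) + 1) / (XS (k+1) : ℝ)) =
      Summable (S ∘ i) by
    congr 1
    funext k
    rw [Function.comp_apply, hcomp k]]
  exact (hmono.injective.summable_iff hvan).symm

lemma qcf_rec (z : ℝ) (n : ℕ) : qcf z (n+2) = ra z n * qcf z (n+1) + qcf z n := rfl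

lemma qstar_rec (x : ℝ) (n : ℕ) : qstar x (n+2) = bEx x n * qstar x (n+1) - qstar x n := rfl

lemma bEx_succ (x : ℝ) (n : ℕ) : bEx x (n+1) = bEx (exm x) n := by
  unfold bEx; rw [Function.iterate_succ_apply]

lemma ra_succ (z : ℝ) (n : ℕ) : ra (gmap z) n = ra z (n+1) := by
  unfold ra; rw [Function.iterate_succ_apply]

lemma bEx_zero (z : ℝ) : bEx z 0 = ra z 0 + 1 := by
  unfold bEx ra
  simp only [Function.iterate_zero, id_eq]
  rw [show (1:ℝ)/z + 1 = 1/z + ((1:ℤ):ℝ) by push_cast; ring, Int.floor_add_intCast]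

lemma semi_series_u (z : ℝ) (hzi : Irrational z) (hz0 : 0 < z) (hz1 : z < 1) :
    (Summable fun n : ℕ => Real.log ((bEx (1-z) n : ℝ) - 1) / (qstar (1-z) (n+1) : ℝ)) ↔
    Summable fun k : ℕ => Real.log ((ra z (2*k+1) : ℝ) + 1) / (qcf z (2*k+2) : ℝ) := by
  have h := extraction z hzi hz0 hz1 (qstar (1-z))
    (fun k => qcf z (2*k)) (fun k => qcf z (2*k+1))
    (fun n => rfl) rfl (by simp [qstar, qcf])
    (fun k => by beta_reduce; rw [show 2*(k+1) = (2*k)+2 by ring, qcf_rec]; ring)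
    (fun k => by beta_reduce; rw [show 2*(k+1)+1 = (2*k+1)+2 by ring, qcf_rec]; ring)
  rw [h]
  constructor <;> intro hs <;> refine hs.congr ?_ <;> intro k <;> beta_reduce
  · rw [show 2*(k+1) = 2*k+2 by ring]
  · rw [show 2*(k+1) = 2*k+2 by ring]

lemma semi_series_x (z : ℝ) (hzi : Irrational z) (hz0 : 0 < z) (hz1 : z < 1) :
    (Summable fun n : ℕ => Real.log ((bEx z (n+1) : ℝ) - 1) / (qstar z (n+2) : ℝ)) ↔
    Summable fun k : ℕ => Real.log ((ra z (2*k+2) : ℝ) + 1) / (qcf z (2*k+3) : ℝ) := by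
  obtain ⟨hgi, hg0, hg1⟩ := orbit_mem z hzi hz0 hz1 1
  rw [Function.iterate_one] at hgi hg0 hg1
  have hbe : ∀ n, bEx (1 - gmap z) n = bEx z (n+1) := by
    intro n
    rw [bEx_succ, exm_eq]
  have h := extraction (gmap z) hgi hg0 hg1 (fun n => qstar z (n+1))
    (fun k => qcf z (2*k+1)) (fun k => qcf z (2*k+2))
    (fun n => by
      show qstar z ((n+1)+2) = _
      rw [qstar_rec, hbe])
    rfl
    (by show qstar z 2 = qcf z 1 + qcf z 2
        rw [qstar_rec, bEx_zero, qcf_rec]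
        simp [qstar, qcf]
        ring)
    (fun k => by
      beta_reduce
      rw [ra_succ, show 2*(k+1)+1 = (2*k+1)+2 by ring, qcf_rec]
      ring)
    (fun k => by
      beta_reduce
      rw [ra_succ, show 2*(k+1)+2 = (2*k+2)+2 by ring, qcf_rec,
        show 2*k+2+1 = 2*k+3 by ring]
      ring)
  rw [show (fun n : ℕ => Real.log ((bEx z (n+1) : ℝ) - 1) / (qstar z (n+2) : ℝ)) =
      (fun n : ℕ => Real.log ((bEx (1 - gmap z) n : ℝ) - 1) / (qstar z (n+2) : ℝ)) by
    funext n; rw [hbe]]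
  rw [h]
  constructor <;> intro hs <;> refine hs.congr ?_ <;> intro k <;> beta_reduce
  · rw [ra_succ, show 2*(k+1)+1 = 2*k+3 by ring, show 2*k+1+1 = 2*k+2 by ring]
  · rw [ra_succ, show 2*(k+1)+1 = 2*k+3 by ring, show 2*k+1+1 = 2*k+2 by ring]

section
variable {z : ℝ}

lemma qcf_mono' (hra : ∀ n, 1 ≤ ra z n) (n : ℕ) : qcf z n ≤ qcf z (n+1) := by
  match n with
  | 0 => simp [qcf]
  | n+1 => exact qcf_mono hra n

lemma ra_le_qcf (hra : ∀ n, 1 ≤ ra z n) (n : ℕ) : ra z n ≤ qcf z (n+2) := by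
  rw [qcf_rec]
  have h1 := qcf_pos hra n
  have h2 := qcf_nonneg hra n
  nlinarith [hra n]

lemma qcf_upper (hra : ∀ n, 1 ≤ ra z n) (n : ℕ) :
    qcf z (n+2) ≤ (ra z n + 1) * qcf z (n+1) := by
  rw [qcf_rec]
  have h2 := qcf_mono' hra n
  nlinarith [qcf_pos hra n]

lemma qcf_growth (hra : ∀ n, 1 ≤ ra z n) :
    ∀ n, Real.sqrt 2 ^ n ≤ Real.sqrt 2 * (qcf z (n+1) : ℝ) := by
  have hs1 : (1:ℝ) ≤ Real.sqrt 2 := by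
    rw [show (1:ℝ) = Real.sqrt 1 by simp]
    exact Real.sqrt_le_sqrt (by norm_num)
  intro n
  induction n using Nat.strong_induction_on with
  | _ n ih =>
    match n with
    | 0 =>
      have : (1:ℝ) ≤ (qcf z 1 : ℝ) := by exact_mod_cast qcf_pos hra 0
      simpa using by nlinarith
    | 1 =>
      have : (1:ℝ) ≤ (qcf z 2 : ℝ) := by exact_mod_cast qcf_pos hra 1
      simpa using by nlinarith
    | n+2 =>
      have h1 := ih n (by omega)
      have h2 : (2:ℝ) * (qcf z (n+1):ℝ) ≤ (qcf z (n+3):ℝ) := by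
        exact_mod_cast qcf_two_step hra n
      have h3 : Real.sqrt 2 ^ (n+2) = 2 * Real.sqrt 2 ^ n := by
        rw [pow_succ, pow_succ, mul_assoc, Real.mul_self_sqrt (by norm_num)]
        ring
      have h4 : (0:ℝ) < Real.sqrt 2 := by linarith
      calc Real.sqrt 2 ^ (n+2) = 2 * Real.sqrt 2 ^ n := h3
        _ ≤ 2 * (Real.sqrt 2 * (qcf z (n+1):ℝ)) := by nlinarith
        _ = Real.sqrt 2 * (2 * (qcf z (n+1):ℝ)) := by ring
        _ ≤ Real.sqrt 2 * (qcf z (n+3):ℝ) := by nlinarith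

lemma summable_G (hra : ∀ n, 1 ≤ ra z n) :
    Summable (fun n : ℕ => 1 / Real.sqrt ((qcf z (n+1) : ℝ))) := by
  set s := Real.sqrt (Real.sqrt 2) with hsdef
  have h2 : (0:ℝ) ≤ Real.sqrt 2 := Real.sqrt_nonneg 2
  have hs2 : s^2 = Real.sqrt 2 := Real.sq_sqrt h2
  have h12 : (1:ℝ) < Real.sqrt 2 := by
    rw [show (1:ℝ) = Real.sqrt 1 by simp]
    exact Real.sqrt_lt_sqrt (by norm_num) (by norm_num)
  have hs1 : 1 < s := by
    rw [show (1:ℝ) = Real.sqrt 1 by simp, hsdef]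
    exact Real.sqrt_lt_sqrt (by norm_num) h12
  have hs0 : (0:ℝ) < s := by linarith
  apply Summable.of_nonneg_of_le (fun n => by positivity) (fun n => ?_)
    ((summable_geometric_of_lt_one (by positivity) (inv_lt_one_of_one_lt₀ hs1)).mul_left s)
  have hq1 : (1:ℝ) ≤ (qcf z (n+1):ℝ) := by exact_mod_cast qcf_pos hra n
  have hq0 : (0:ℝ) ≤ (qcf z (n+1):ℝ) := by linarith
  have key : s^n ≤ s * Real.sqrt ((qcf z (n+1):ℝ)) := by
    have h4 : (s^n)^2 = (Real.sqrt 2)^n := by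
      rw [← pow_mul, mul_comm, pow_mul, hs2]
    have h5 : (s * Real.sqrt ((qcf z (n+1):ℝ)))^2 = Real.sqrt 2 * (qcf z (n+1):ℝ) := by
      rw [mul_pow, hs2, Real.sq_sqrt hq0]
    have hg : (s^n)^2 ≤ (s * Real.sqrt ((qcf z (n+1):ℝ)))^2 := by
      rw [h4, h5]; exact qcf_growth hra n
    have := Real.sqrt_le_sqrt hg
    rwa [Real.sqrt_sq (pow_nonneg hs0.le n), Real.sqrt_sq (by positivity)] at this
  have hsq : 0 < Real.sqrt ((qcf z (n+1):ℝ)) := Real.sqrt_pos.2 (by linarith)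
  rw [show s * (s⁻¹)^n = s / s^n by rw [inv_pow, div_eq_mul_inv]]
  rw [div_le_div_iff₀ hsq (pow_pos hs0 n)]
  calc 1 * s^n = s^n := by ring
    _ ≤ s * Real.sqrt ((qcf z (n+1):ℝ)) := key

lemma log_div_le_aux {Q : ℝ} (hQ : 1 ≤ Q) : Real.log Q / Q ≤ 2 * (1 / Real.sqrt Q) := by
  have hQ0 : (0:ℝ) < Q := by linarith
  have hs : 0 < Real.sqrt Q := Real.sqrt_pos.2 hQ0
  have hlog : Real.log Q ≤ 2 * Real.sqrt Q := by
    have h1 := Real.log_le_sub_one_of_pos hs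
    have h2 : Real.log (Real.sqrt Q) = Real.log Q / 2 := Real.log_sqrt hQ0.le
    linarith
  rw [show (2:ℝ) * (1 / Real.sqrt Q) = 2 / Real.sqrt Q by ring]
  rw [div_le_div_iff₀ hQ0 hs]
  have hmm : Real.sqrt Q * Real.sqrt Q = Q := Real.mul_self_sqrt hQ0.le
  nlinarith [mul_le_mul_of_nonneg_right hlog hs.le]

lemma one_div_le_aux {Q : ℝ} (hQ : 1 ≤ Q) : 1 / Q ≤ 1 / Real.sqrt Q := by
  have hQ0 : (0:ℝ) < Q := by linarith
  have hs : 0 < Real.sqrt Q := Real.sqrt_pos.2 hQ0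
  apply one_div_le_one_div_of_le hs
  calc Real.sqrt Q ≤ Real.sqrt (Q * Q) := Real.sqrt_le_sqrt (by nlinarith)
    _ = Q := Real.sqrt_mul_self hQ0.le

lemma summable_B_iff_C (hra : ∀ n, 1 ≤ ra z n) :
    (Summable fun n : ℕ => Real.log ((qcf z (n+2) : ℝ)) / (qcf z (n+1) : ℝ)) ↔
    Summable fun n : ℕ => Real.log ((ra z n : ℝ) + 1) / (qcf z (n+1) : ℝ) := by
  have hfacts : ∀ n : ℕ, (1:ℝ) ≤ (qcf z (n+1):ℝ) ∧ (1:ℝ) ≤ (qcf z (n+2):ℝ) ∧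
      (1:ℝ) ≤ (ra z n : ℝ) ∧ ((ra z n : ℝ) + 1) ≤ 2 * (qcf z (n+2):ℝ) ∧
      (qcf z (n+2):ℝ) ≤ ((ra z n : ℝ) + 1) * (qcf z (n+1):ℝ) := by
    intro n
    refine ⟨by exact_mod_cast qcf_pos hra n, by exact_mod_cast qcf_pos hra (n+1),
      by exact_mod_cast hra n, ?_, by exact_mod_cast qcf_upper hra n⟩
    have h1 : (ra z n : ℝ) ≤ (qcf z (n+2):ℝ) := by exact_mod_cast ra_le_qcf hra n
    have h2 : (1:ℝ) ≤ (qcf z (n+2):ℝ) := by exact_mod_cast qcf_pos hra (n+1)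
    linarith
  have hG := summable_G hra
  constructor
  · intro hB
    refine Summable.of_nonneg_of_le
      (fun n => ?_) (fun n => ?_) (hB.add (hG.mul_left (Real.log 2)))
    · obtain ⟨h1, h2, h3, h4, h5⟩ := hfacts n
      have : (0:ℝ) ≤ Real.log ((ra z n : ℝ) + 1) := Real.log_nonneg (by linarith)
      positivity
    · obtain ⟨h1, h2, h3, h4, h5⟩ := hfacts n
      have hlog : Real.log ((ra z n : ℝ) + 1) ≤ Real.log 2 + Real.log ((qcf z (n+2):ℝ)) := by
        rw [← Real.log_mul (by norm_num) (by linarith)]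
        exact Real.log_le_log (by linarith) h4
      have hq0 : (0:ℝ) < (qcf z (n+1):ℝ) := by linarith
      have step1 : Real.log ((ra z n : ℝ) + 1) / (qcf z (n+1):ℝ) ≤
          (Real.log 2 + Real.log ((qcf z (n+2):ℝ))) / (qcf z (n+1):ℝ) :=
        div_le_div_of_nonneg_right hlog hq0.le
      have step2 : (Real.log 2 + Real.log ((qcf z (n+2):ℝ))) / (qcf z (n+1):ℝ) =
          Real.log ((qcf z (n+2):ℝ)) / (qcf z (n+1):ℝ) + Real.log 2 / (qcf z (n+1):ℝ) := by
        ring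
      have step3 : Real.log 2 / (qcf z (n+1):ℝ) ≤ Real.log 2 * (1 / Real.sqrt ((qcf z (n+1):ℝ))) := by
        rw [div_eq_mul_one_div]
        exact mul_le_mul_of_nonneg_left (one_div_le_aux h1) (Real.log_nonneg (by norm_num))
      calc Real.log ((ra z n : ℝ) + 1) / (qcf z (n+1):ℝ)
          ≤ (Real.log 2 + Real.log ((qcf z (n+2):ℝ))) / (qcf z (n+1):ℝ) := step1
        _ = Real.log ((qcf z (n+2):ℝ)) / (qcf z (n+1):ℝ) + Real.log 2 / (qcf z (n+1):ℝ) := step2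
        _ ≤ _ := by exact add_le_add_right step3 _
  · intro hC
    refine Summable.of_nonneg_of_le
      (fun n => ?_) (fun n => ?_) (hC.add (hG.mul_left 2))
    · obtain ⟨h1, h2, h3, h4, h5⟩ := hfacts n
      have : (0:ℝ) ≤ Real.log ((qcf z (n+2):ℝ)) := Real.log_nonneg h2
      positivity
    · obtain ⟨h1, h2, h3, h4, h5⟩ := hfacts n
      have hq0 : (0:ℝ) < (qcf z (n+1):ℝ) := by linarith
      have hlog : Real.log ((qcf z (n+2):ℝ)) ≤
          Real.log ((ra z n : ℝ) + 1) + Real.log ((qcf z (n+1):ℝ)) := by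
        rw [← Real.log_mul (by linarith) (by linarith)]
        exact Real.log_le_log (by linarith) h5
      have step1 : Real.log ((qcf z (n+2):ℝ)) / (qcf z (n+1):ℝ) ≤
          (Real.log ((ra z n : ℝ) + 1) + Real.log ((qcf z (n+1):ℝ))) / (qcf z (n+1):ℝ) :=
        div_le_div_of_nonneg_right hlog hq0.le
      have step2 : (Real.log ((ra z n : ℝ) + 1) + Real.log ((qcf z (n+1):ℝ))) / (qcf z (n+1):ℝ)
          = Real.log ((ra z n : ℝ) + 1) / (qcf z (n+1):ℝ)
            + Real.log ((qcf z (n+1):ℝ)) / (qcf z (n+1):ℝ) := by ring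
      calc Real.log ((qcf z (n+2):ℝ)) / (qcf z (n+1):ℝ)
          ≤ _ := step1
        _ = _ := step2
        _ ≤ _ := add_le_add_right (log_div_le_aux h1) _
end

/-- Proposition 2.13: an irrational number `x` is a Brjuno number if and only if
both `x` and `−x` are semi-Brjuno numbers. -/
theorem isBrjuno_iff_isSemiBrjuno_and_neg (x : ℝ) (hirr : Irrational x) :
    IsBrjuno x ↔ IsSemiBrjuno x ∧ IsSemiBrjuno (-x) := by
  set z := Int.fract x with hzdef
  have hzi : Irrational z := by
    rw [hzdef, Int.fract]
    exact hirr.sub_intCast ⌊x⌋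
  have hz0 : 0 < z := by
    rcases lt_or_eq_of_le (Int.fract_nonneg x) with h | h
    · exact h
    · exact absurd (hzdef ▸ h.symm : z = 0) (by simpa using hzi.ne_int 0)
  have hz1 : z < 1 := Int.fract_lt_one x
  have horb := orbit_mem z hzi hz0 hz1
  have hra := ra_pos z horb
  have hfx : Int.fract (-x) = 1 - z := Int.fract_neg hz0.ne'
  have hB : IsBrjuno x ↔
      Summable (fun n : ℕ => Real.log ((ra z n : ℝ) + 1) / (qcf z (n+1) : ℝ)) := by
    unfold IsBrjuno
    rw [← hzdef]
    exact summable_B_iff_C hra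
  have hinj2 : Function.Injective (fun k : ℕ => 2*k) := fun a b h => by
    simp only [] at h; omega
  have hinj2' : Function.Injective (fun k : ℕ => 2*k+1) := fun a b h => by
    simp only [] at h; omega
  have hsplit : (Summable fun n : ℕ => Real.log ((ra z n : ℝ) + 1) / (qcf z (n+1) : ℝ)) ↔
      ((Summable fun k : ℕ => Real.log ((ra z (2*k) : ℝ) + 1) / (qcf z (2*k+1) : ℝ)) ∧
       (Summable fun k : ℕ => Real.log ((ra z (2*k+1) : ℝ) + 1) / (qcf z (2*k+2) : ℝ))) := by
    constructor
    · intro h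
      refine ⟨h.comp_injective hinj2, ?_⟩
      refine (h.comp_injective hinj2').congr (fun k => ?_)
      simp only [Function.comp_apply]
    · rintro ⟨he, ho⟩
      have ho' : Summable fun k : ℕ =>
          Real.log ((ra z (2*k+1) : ℝ) + 1) / (qcf z (2*k+1+1) : ℝ) :=
        ho.congr (fun k => by ring_nf)
      exact Summable.even_add_odd he ho'
  have hshift1 : IsSemiBrjuno x ↔
      Summable (fun n : ℕ => Real.log ((bEx z (n+1) : ℝ) - 1) / (qstar z (n+2) : ℝ)) := by
    unfold IsSemiBrjuno
    rw [← hzdef]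
    exact (summable_nat_add_iff 1).symm
  have hSx : IsSemiBrjuno x ↔
      Summable fun k : ℕ => Real.log ((ra z (2*k) : ℝ) + 1) / (qcf z (2*k+1) : ℝ) := by
    rw [hshift1, semi_series_x z hzi hz0 hz1]
    constructor
    · intro h
      apply (summable_nat_add_iff (f := fun k : ℕ =>
        Real.log ((ra z (2*k) : ℝ) + 1) / (qcf z (2*k+1) : ℝ)) 1).1
      refine h.congr (fun k => by ring_nf)
    · intro h
      have h2 := (summable_nat_add_iff (f := fun k : ℕ =>
        Real.log ((ra z (2*k) : ℝ) + 1) / (qcf z (2*k+1) : ℝ)) 1).2 h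
      refine h2.congr (fun k => by ring_nf)
  have hSnx : IsSemiBrjuno (-x) ↔
      Summable fun k : ℕ => Real.log ((ra z (2*k+1) : ℝ) + 1) / (qcf z (2*k+2) : ℝ) := by
    unfold IsSemiBrjuno
    rw [hfx]
    exact semi_series_u z hzi hz0 hz1
  rw [hB, hsplit, hSx, hSnx]
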